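/- Let g : U × X → X be a measurable driven system with Polish input space U, (X, d_X) compact, and suppose g is uniformly continuous in the first variable uniformly in the second (for every ε > 0 there is δ > 0 such that d_U(u,v) < δ implies d_X(g(u,x), g(v,x)) < ε for all x ∈ X). Then for each fixed μ ∈ P_1(X), the map θ ↦ P_g(θ, μ) from (P_1(U), W) to (P_1(X), W) is continuous. -/

import Mathlib

open MeasureTheory ENNReal

/-- The Wasserstein-1 distance: infimum over couplings of the expected distance. -/
noncomputable def W1 {Y : Type*} [PseudoEMetricSpace Y] [MeasurableSpace Y]
    (μ ν : Measure Y) : ℝ≥0∞ :=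
  ⨅ (π : Measure (Y × Y)) (_ : π.map Prod.fst = μ ∧ π.map Prod.snd = ν),
    ∫⁻ p, edist p.1 p.2 ∂π

lemma W1_push_le_aux {U X : Type*}
    [MeasurableSpace U] [MetricSpace U] [BorelSpace U] [SecondCountableTopology U]
    [MeasurableSpace X] [MetricSpace X] [BorelSpace X] [CompactSpace X]
    (g : U → X → X) (hg : Measurable (Function.uncurry g))
    (μ : Measure X) [IsProbabilityMeasure μ]
    (θ θ' : Measure U) [IsProbabilityMeasure θ] [IsProbabilityMeasure θ']
    {e δ : ℝ} (hδ0 : 0 < δ)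
    (hδ : ∀ u v : U, dist u v < δ → ∀ x : X, dist (g u x) (g v x) < e)
    (π : Measure (U × U)) (hπ : π.map Prod.fst = θ ∧ π.map Prod.snd = θ') :
    W1 ((θ.prod μ).map (Function.uncurry g)) ((θ'.prod μ).map (Function.uncurry g))
      ≤ ENNReal.ofReal e + EMetric.diam (Set.univ : Set X) *
          ((∫⁻ p, edist p.1 p.2 ∂π) / ENNReal.ofReal δ) := by
  haveI : IsProbabilityMeasure π := by
    constructor
    have h1 : π.map Prod.fst Set.univ = 1 := by rw [hπ.1]; exact measure_univ
    rwa [Measure.map_apply measurable_fst MeasurableSet.univ, Set.preimage_univ] at h1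
  set D := EMetric.diam (Set.univ : Set X) with hD
  set F : (U × U) × X → X × X := fun q => (g q.1.1 q.2, g q.1.2 q.2) with hFdef
  have hF : Measurable F :=
    (hg.comp (measurable_fst.fst.prodMk measurable_snd)).prodMk
      (hg.comp (measurable_fst.snd.prodMk measurable_snd))
  set cplg := (π.prod μ).map F with hcplg
  have hfst : cplg.map Prod.fst = (θ.prod μ).map (Function.uncurry g) := by
    rw [hcplg, Measure.map_map measurable_fst hF]
    have h1 : θ.prod μ = (π.prod μ).map (Prod.map Prod.fst id) := by
      rw [← hπ.1]
      calc (π.map Prod.fst).prod μ = (π.map Prod.fst).prod (μ.map id) := by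
            rw [Measure.map_id]
        _ = (π.prod μ).map (Prod.map Prod.fst id) :=
            Measure.map_prod_map _ _ measurable_fst measurable_id
    rw [h1, Measure.map_map hg (measurable_fst.prodMap measurable_id)]
    rfl
  have hsnd : cplg.map Prod.snd = (θ'.prod μ).map (Function.uncurry g) := by
    rw [hcplg, Measure.map_map measurable_snd hF]
    have h1 : θ'.prod μ = (π.prod μ).map (Prod.map Prod.snd id) := by
      rw [← hπ.2]
      calc (π.map Prod.snd).prod μ = (π.map Prod.snd).prod (μ.map id) := by
            rw [Measure.map_id]
        _ = (π.prod μ).map (Prod.map Prod.snd id) :=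
            Measure.map_prod_map _ _ measurable_snd measurable_id
    rw [h1, Measure.map_map hg (measurable_snd.prodMap measurable_id)]
    rfl
  have hW : W1 ((θ.prod μ).map (Function.uncurry g)) ((θ'.prod μ).map (Function.uncurry g))
      ≤ ∫⁻ p, edist p.1 p.2 ∂cplg :=
    iInf_le_of_le cplg (iInf_le_of_le ⟨hfst, hsnd⟩ le_rfl)
  refine hW.trans ?_
  rw [hcplg, lintegral_map (measurable_fst.edist measurable_snd) hF]
  set t : Set (U × U) := {p | δ ≤ dist p.1 p.2} with ht'
  have ht : MeasurableSet t := measurableSet_le measurable_const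
    (measurable_fst.dist measurable_snd)
  have hpt : ∀ q : (U × U) × X, edist (F q).1 (F q).2
      ≤ ENNReal.ofReal e + D * t.indicator (fun _ => 1) q.1 := by
    intro q
    by_cases h : dist q.1.1 q.1.2 < δ
    · have h2 : edist (F q).1 (F q).2 ≤ ENNReal.ofReal e := by
        rw [edist_dist]
        exact ENNReal.ofReal_le_ofReal (hδ _ _ h _).le
      exact h2.trans le_self_add
    · have hmem : q.1 ∈ t := not_lt.mp h
      rw [Set.indicator_of_mem hmem, mul_one]
      exact le_add_left (EMetric.edist_le_diam_of_mem (Set.mem_univ _) (Set.mem_univ _))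
  have hπfst : (π.prod μ).map Prod.fst = π := by
    rw [Measure.map_fst_prod, measure_univ, one_smul]
  have hind : ∫⁻ q : (U × U) × X, t.indicator (fun _ => 1) q.1 ∂(π.prod μ) = π t := by
    rw [← lintegral_map (measurable_const.indicator ht) measurable_fst, hπfst]
    exact lintegral_indicator_one ht
  calc ∫⁻ q, edist (F q).1 (F q).2 ∂(π.prod μ)
      ≤ ∫⁻ q, (ENNReal.ofReal e + D * t.indicator (fun _ => 1) q.1) ∂(π.prod μ) :=
        lintegral_mono hpt
    _ = ENNReal.ofReal e + D * π t := by
        rw [lintegral_add_left measurable_const, lintegral_const, measure_univ, mul_one,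
          lintegral_const_mul D (show Measurable fun a : (U × U) × X =>
            t.indicator (fun _ => (1 : ℝ≥0∞)) a.1 from
            (measurable_const.indicator ht).comp measurable_fst), hind]
    _ ≤ ENNReal.ofReal e + D * ((∫⁻ p, edist p.1 p.2 ∂π) / ENNReal.ofReal δ) := by
        gcongr
        have hmark := meas_ge_le_lintegral_div
          (μ := π) (f := fun p => edist p.1 p.2)
          (measurable_fst.edist measurable_snd).aemeasurable
          (ENNReal.ofReal_pos.mpr hδ0).ne' ENNReal.ofReal_ne_top
        refine le_trans (measure_mono ?_) hmark
        intro p hp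
        simp only [ht', Set.mem_setOf_eq] at hp ⊢
        rw [edist_dist]
        exact ENNReal.ofReal_le_ofReal hp

theorem stmt_17 {U X : Type*}
    [MeasurableSpace U] [MetricSpace U] [BorelSpace U] [PolishSpace U]
    [MeasurableSpace X] [MetricSpace X] [BorelSpace X] [CompactSpace X]
    (g : U → X → X) (hg : Measurable (Function.uncurry g))
    (hu : ∀ ε : ℝ, 0 < ε → ∃ δ : ℝ, 0 < δ ∧
        ∀ u v : U, dist u v < δ → ∀ x : X, dist (g u x) (g v x) < ε)
    (μ : Measure X) [IsProbabilityMeasure μ]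
    (θ : ℕ → Measure U) (θlim : Measure U)
    (hθ : ∀ n, IsProbabilityMeasure (θ n)) (hθlim : IsProbabilityMeasure θlim)
    (hθfin : ∀ n, ∃ u₀ : U, ∫⁻ u, edist u₀ u ∂(θ n) < ⊤)
    (hθlimfin : ∃ u₀ : U, ∫⁻ u, edist u₀ u ∂θlim < ⊤)
    (hconv : Filter.Tendsto (fun n => W1 (θ n) θlim) Filter.atTop (nhds 0)) :
    Filter.Tendsto
      (fun n => W1 (((θ n).prod μ).map (Function.uncurry g))
                   ((θlim.prod μ).map (Function.uncurry g)))
      Filter.atTop (nhds 0) := by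
  haveI := hθlim
  rw [ENNReal.tendsto_nhds_zero]
  intro ε hε
  obtain ⟨r, hr0, hrε⟩ := ENNReal.lt_iff_exists_nnreal_btwn.mp hε
  have hrpos : (0 : ℝ) < (r : ℝ) := by exact_mod_cast ENNReal.coe_pos.mp hr0
  set e : ℝ := (r : ℝ) / 2 with hedef
  have he : 0 < e := by positivity
  obtain ⟨δ, hδ0, hδ⟩ := hu e he
  set D := EMetric.diam (Set.univ : Set X) with hDdef
  have hDne : D ≠ ⊤ := (isCompact_univ.isBounded).ediam_ne_top
  have hD1ne : D + 1 ≠ ⊤ := ENNReal.add_ne_top.mpr ⟨hDne, ENNReal.one_ne_top⟩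
  have hD1pos : (0 : ℝ≥0∞) < D + 1 := zero_lt_one.trans_le le_add_self
  set η := ENNReal.ofReal δ * (ENNReal.ofReal e / (D + 1)) with hηdef
  have hηpos : 0 < η := ENNReal.mul_pos (ENNReal.ofReal_pos.mpr hδ0).ne'
    (ENNReal.div_pos (ENNReal.ofReal_pos.mpr he).ne' hD1ne).ne'
  have hev : ∀ᶠ n in Filter.atTop, W1 (θ n) θlim < η :=
    hconv.eventually (gt_mem_nhds hηpos)
  filter_upwards [hev] with n hn
  haveI := hθ n
  unfold W1 at hn
  obtain ⟨π, h1⟩ := iInf_lt_iff.mp hn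
  obtain ⟨hπ, hπc⟩ := iInf_lt_iff.mp h1
  refine le_trans (W1_push_le_aux g hg μ (θ n) θlim hδ0 hδ π hπ) ?_
  have hb0 : ENNReal.ofReal δ ≠ 0 := (ENNReal.ofReal_pos.mpr hδ0).ne'
  have hbt : ENNReal.ofReal δ ≠ ⊤ := ENNReal.ofReal_ne_top
  have h2 : (∫⁻ p, edist p.1 p.2 ∂π) / ENNReal.ofReal δ ≤ ENNReal.ofReal e / (D + 1) := by
    refine le_trans (ENNReal.div_le_div_right hπc.le _) ?_
    rw [hηdef, mul_comm, mul_div_assoc, ENNReal.div_self hb0 hbt, mul_one]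
  have h3 : D * (ENNReal.ofReal e / (D + 1)) ≤ ENNReal.ofReal e :=
    calc D * (ENNReal.ofReal e / (D + 1)) ≤ (D + 1) * (ENNReal.ofReal e / (D + 1)) := by
          gcongr; exact le_self_add
      _ = ENNReal.ofReal e := ENNReal.mul_div_cancel hD1pos.ne' hD1ne
  calc ENNReal.ofReal e + D * ((∫⁻ p, edist p.1 p.2 ∂π) / ENNReal.ofReal δ)
      ≤ ENNReal.ofReal e + D * (ENNReal.ofReal e / (D + 1)) := by gcongr
    _ ≤ ENNReal.ofReal e + ENNReal.ofReal e := add_le_add le_rfl h3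
    _ = ENNReal.ofReal (e + e) := (ENNReal.ofReal_add he.le he.le).symm
    _ = (r : ℝ≥0∞) := by
        rw [show e + e = (r : ℝ) by rw [hedef]; ring]
        exact ENNReal.ofReal_coe_nnreal
    _ ≤ ε := hrε.le
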